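/- (Peeling behaviour.) Suppose ω = 0, 0 < Ξ ≤ 1, and there are constants C ≥ 0 and 0 < b₀ ≤ b ≤ b₁ such that |φₙ| ≤ C for n = 0,…,4. Then |Ψ̃₀| ≤ C b₀⁻² Ξ⁵, |Ψ̃₁| ≤ C b₀⁻¹ Ξ⁴, |Ψ̃₂| ≤ C Ξ³, |Ψ̃₃| ≤ C b₁ Ξ², and |Ψ̃₄| ≤ C b₁² Ξ. -/

import Mathlib

open Complex

private lemma map4_smul {V : Type*} [AddCommGroup V] [Module ℂ V]
    (Cw : MultilinearMap ℂ (fun _ : Fin 4 => V) ℂ)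
    (a b c d : ℂ) (x y z w : V) :
    Cw ![a • x, b • y, c • z, d • w] = a * b * c * d * Cw ![x, y, z, w] := by
  have e : (![a • x, b • y, c • z, d • w] : Fin 4 → V)
      = fun i => ![a, b, c, d] i • ![x, y, z, w] i := by
    funext i; fin_cases i <;> rfl
  rw [e, Cw.map_smul_univ, Fin.prod_univ_four]
  simp [smul_eq_mul]

set_option maxHeartbeats 1000000 in
/-- Peeling behaviour: if ω = 0, 0 < Ξ ≤ 1, and the rescaled
Weyl scalars are bounded by C while the boost parameter satisfies
0 < b₀ ≤ b ≤ b₁, then the physical Weyl scalars obey the peeling bounds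
|Ψ̃ₙ| ≲ Ξ^(5−n). -/
theorem peeling_behaviour
    {V : Type*} [AddCommGroup V] [Module ℂ V]
    (Cw : MultilinearMap ℂ (fun _ : Fin 4 => V) ℂ)
    (ℓt kt mt mst : V)
    (Ξ b ϑ ω : ℝ) (hΞpos : 0 < Ξ) (hbpos : 0 < b)
    (ℓ k m ms : V)
    (hℓ : ℓ = ((Ξ ^ (-2 - 2*ω) * b : ℝ) : ℂ) • ℓt)
    (hk : k = ((Ξ ^ (2*ω) * b⁻¹ : ℝ) : ℂ) • kt)
    (hm : m = (((Ξ⁻¹ : ℝ) : ℂ) * Complex.exp ((ϑ : ℂ) * Complex.I)) • mt)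
    (hms : ms = (((Ξ⁻¹ : ℝ) : ℂ) * Complex.exp (-(ϑ : ℂ) * Complex.I)) • mst)
    (d : V → V → V → V → ℂ)
    (hd : ∀ x y z w, d x y z w = (Ξ : ℂ) * Cw ![x, y, z, w])
    (Ψ0 Ψ1 Ψ2 Ψ3 Ψ4 φ0 φ1 φ2 φ3 φ4 : ℂ)
    (hΨ0 : Ψ0 = Cw ![ℓt, mt, ℓt, mt]) (hΨ1 : Ψ1 = Cw ![ℓt, kt, ℓt, mt])
    (hΨ2 : Ψ2 = Cw ![ℓt, mt, mst, kt]) (hΨ3 : Ψ3 = Cw ![ℓt, kt, mst, kt])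
    (hΨ4 : Ψ4 = Cw ![kt, mst, kt, mst])
    (hφ0 : φ0 = d ℓ m ℓ m) (hφ1 : φ1 = d ℓ k ℓ m)
    (hφ2 : φ2 = d ℓ m ms k) (hφ3 : φ3 = d ℓ k ms k)
    (hφ4 : φ4 = d k ms k ms)
    (hω : ω = 0) (hΞ1 : Ξ ≤ 1)
    (C b0 b1 : ℝ) (hC : 0 ≤ C) (hb0 : 0 < b0) (hb0b : b0 ≤ b) (hbb1 : b ≤ b1)
    (hbd0 : ‖φ0‖ ≤ C) (hbd1 : ‖φ1‖ ≤ C)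
    (hbd2 : ‖φ2‖ ≤ C) (hbd3 : ‖φ3‖ ≤ C)
    (hbd4 : ‖φ4‖ ≤ C) :
    ‖Ψ0‖ ≤ C * (b0 ^ 2)⁻¹ * Ξ ^ 5 ∧
    ‖Ψ1‖ ≤ C * b0⁻¹ * Ξ ^ 4 ∧
    ‖Ψ2‖ ≤ C * Ξ ^ 3 ∧
    ‖Ψ3‖ ≤ C * b1 * Ξ ^ 2 ∧
    ‖Ψ4‖ ≤ C * b1 ^ 2 * Ξ := by
  have he1 : ‖Complex.exp ((ϑ : ℂ) * Complex.I)‖ = 1 := by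
    rw [Complex.norm_exp]; simp [Complex.mul_re]
  have he2 : ‖Complex.exp (-(ϑ : ℂ) * Complex.I)‖ = 1 := by
    rw [Complex.norm_exp]; simp [Complex.mul_re]
  have hr : Ξ ^ (-2 - 2*ω) = (Ξ ^ 2)⁻¹ := by
    rw [hω, show (-2 - 2*(0:ℝ)) = -((2:ℕ):ℝ) by norm_num, Real.rpow_neg hΞpos.le,
      Real.rpow_natCast]
  have hs : Ξ ^ (2*ω) = 1 := by
    rw [hω, mul_zero, Real.rpow_zero]
  have hℓ' : ℓ = ((((Ξ ^ 2)⁻¹ * b : ℝ)) : ℂ) • ℓt := by rw [hℓ, hr]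
  have hk' : k = (((b⁻¹ : ℝ)) : ℂ) • kt := by rw [hk, hs, one_mul]
  have hrpos : (0:ℝ) < (Ξ ^ 2)⁻¹ * b := by positivity
  have hipos : (0:ℝ) < Ξ⁻¹ := by positivity
  -- abs equalities
  have a0 : ‖φ0‖ = (b ^ 2 / Ξ ^ 5) * ‖Ψ0‖ := by
    rw [hφ0, hd, hℓ', hm, hΨ0, map4_smul]
    simp only [norm_mul, he1, Complex.norm_real, Real.norm_eq_abs, mul_one]
    rw [abs_of_pos hΞpos, abs_of_pos (inv_pos.mpr (pow_pos hΞpos 2)), abs_of_pos hbpos, abs_of_pos hipos]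
    field_simp
  have a1 : ‖φ1‖ = (b / Ξ ^ 4) * ‖Ψ1‖ := by
    rw [hφ1, hd, hℓ', hk', hm, hΨ1, map4_smul]
    simp only [norm_mul, he1, Complex.norm_real, Real.norm_eq_abs, mul_one]
    rw [abs_of_pos hΞpos, abs_of_pos (inv_pos.mpr (pow_pos hΞpos 2)), abs_of_pos hbpos, abs_of_pos hipos,
      abs_of_pos (inv_pos.mpr hbpos)]
    field_simp
  have a2 : ‖φ2‖ = (1 / Ξ ^ 3) * ‖Ψ2‖ := by
    rw [hφ2, hd, hℓ', hm, hms, hk', hΨ2, map4_smul]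
    simp only [norm_mul, he1, he2, Complex.norm_real, Real.norm_eq_abs, mul_one]
    rw [abs_of_pos hΞpos, abs_of_pos (inv_pos.mpr (pow_pos hΞpos 2)), abs_of_pos hbpos, abs_of_pos hipos,
      abs_of_pos (inv_pos.mpr hbpos)]
    field_simp
  have a3 : ‖φ3‖ = (1 / (b * Ξ ^ 2)) * ‖Ψ3‖ := by
    rw [hφ3, hd, hℓ', hk', hms, hΨ3, map4_smul]
    simp only [norm_mul, he2, Complex.norm_real, Real.norm_eq_abs, mul_one]
    rw [abs_of_pos hΞpos, abs_of_pos (inv_pos.mpr (pow_pos hΞpos 2)), abs_of_pos hbpos, abs_of_pos hipos,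
      abs_of_pos (inv_pos.mpr hbpos)]
    field_simp
  have a4 : ‖φ4‖ = (1 / (b ^ 2 * Ξ)) * ‖Ψ4‖ := by
    rw [hφ4, hd, hk', hms, hΨ4, map4_smul]
    simp only [norm_mul, he2, Complex.norm_real, Real.norm_eq_abs, mul_one]
    rw [abs_of_pos hΞpos, abs_of_pos hipos, abs_of_pos (inv_pos.mpr hbpos)]
    field_simp
  have n0 := norm_nonneg Ψ0
  have n1 := norm_nonneg Ψ1
  have n3 := norm_nonneg Ψ3
  have n4 := norm_nonneg Ψ4
  refine ⟨?_, ?_, ?_, ?_, ?_⟩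
  · rw [a0, div_mul_eq_mul_div, div_le_iff₀ (by positivity)] at hbd0
    rw [show C * (b0 ^ 2)⁻¹ * Ξ ^ 5 = C * Ξ ^ 5 / b0 ^ 2 by ring,
      le_div_iff₀ (by positivity)]
    nlinarith [mul_nonneg n0 (sub_nonneg.mpr (pow_le_pow_left₀ hb0.le hb0b 2))]
  · rw [a1, div_mul_eq_mul_div, div_le_iff₀ (by positivity)] at hbd1
    rw [show C * b0⁻¹ * Ξ ^ 4 = C * Ξ ^ 4 / b0 by ring, le_div_iff₀ hb0]
    nlinarith [mul_nonneg n1 (sub_nonneg.mpr hb0b)]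
  · rw [a2, div_mul_eq_mul_div, div_le_iff₀ (by positivity)] at hbd2
    linarith
  · rw [a3, div_mul_eq_mul_div, div_le_iff₀ (by positivity)] at hbd3
    calc ‖Ψ3‖ = 1 * ‖Ψ3‖ := (one_mul _).symm
      _ ≤ C * (b * Ξ ^ 2) := hbd3
      _ ≤ C * b1 * Ξ ^ 2 := by nlinarith
  · rw [a4, div_mul_eq_mul_div, div_le_iff₀ (by positivity)] at hbd4
    have hb1 : b ^ 2 ≤ b1 ^ 2 := pow_le_pow_left₀ hbpos.le hbb1 2
    calc ‖Ψ4‖ = 1 * ‖Ψ4‖ := (one_mul _).symm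
      _ ≤ C * (b ^ 2 * Ξ) := hbd4
      _ ≤ C * b1 ^ 2 * Ξ := by nlinarith [mul_nonneg (mul_nonneg hC hΞpos.le) (sub_nonneg.mpr hb1)]
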